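/- Let A be a commutative ring in which 2 is invertible, equipped with a real degree function d. Then for all f, g ∈ A, d(f + g) ≤ max{d(f), d(g)}; moreover if d(f) ≠ d(g) then d(f + g) = max{d(f), d(g)}. -/
import Mathlib

private lemma wb_double (a b : WithBot ℤ) (h : a + a = b + b) : a = b := by
  cases a with
  | bot =>
    cases b with
    | bot => rfl
    | coe b =>
      rw [← WithBot.coe_add] at h
      exact (WithBot.coe_ne_bot h.symm).elim
  | coe a =>
    cases b with
    | bot => simp at h
    | coe b =>
      have : a + a = b + b := by exact_mod_cast h
      have : a = b := by omega
      exact_mod_cast this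

/-- For a real degree function `d` on a commutative ring in which `2` is invertible:
`d (f + g) ≤ max (d f) (d g)`, with equality when `d f ≠ d g`. -/
theorem stmt3 (A : Type) [CommRing A] (h2 : IsUnit (2 : A)) (C : Subring A)
    (d : A → WithBot ℤ)
    (hd0 : ∀ f : A, d f = ⊥ ↔ f = 0)
    (hdC : ∀ c ∈ C, c ≠ 0 → d c = 0)
    (hdCne : ∃ c ∈ C, c ≠ 0)
    (hdmul : ∀ f g : A, d (f * g) = d f + d g)
    (hdsq : ∀ f g : A, d (f ^ 2 + g ^ 2) = max (d f) (d g) + max (d f) (d g)) :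
    ∀ f g : A, d (f + g) ≤ max (d f) (d g) ∧
      (d f ≠ d g → d (f + g) = max (d f) (d g)) := by
  rcases subsingleton_or_nontrivial A with hs | hn
  · intro f g
    have hb : ∀ x : A, d x = ⊥ := fun x => (hd0 x).2 (Subsingleton.elim _ _)
    simp [hb]
  · have h2ne : (2 : A) ≠ 0 := h2.ne_zero
    have h2C : (2 : A) ∈ C := by
      rw [← one_add_one_eq_two]; exact C.add_mem C.one_mem C.one_mem
    have hd2 : d 2 = 0 := hdC 2 h2C h2ne
    have key : ∀ u v : A, max (d (u + v)) (d (u - v)) = max (d u) (d v) := by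
      intro u v
      have e1 : (u + v) ^ 2 + (u - v) ^ 2 = 2 * (u ^ 2 + v ^ 2) := by ring
      have h := hdsq (u + v) (u - v)
      rw [e1, hdmul, hd2, zero_add, hdsq] at h
      exact (wb_double _ _ h).symm
    have sub : ∀ u v : A, d (u + v) ≤ max (d u) (d v) := fun u v =>
      (le_max_left _ _).trans_eq (key u v)
    have hneg : ∀ x : A, d (-x) = d x := by
      intro x
      have h : d (-x * -x) = d (x * x) := by rw [neg_mul_neg]
      rw [hdmul, hdmul] at h
      exact wb_double _ _ h
    intro f g
    refine ⟨sub f g, fun hne => le_antisymm (sub f g) ?_⟩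
    by_contra hlt
    push_neg at hlt
    rcases hne.lt_or_gt with h | h
    · -- d f < d g
      have hm : max (d f) (d g) = d g := max_eq_right h.le
      have hg : d g ≤ max (d (f + g)) (d f) := by
        have h1 := sub (f + g) (-f)
        rw [hneg] at h1
        have e : f + g + -f = g := by ring
        rwa [e] at h1
      have : d g < d g := lt_of_le_of_lt hg (max_lt (hm ▸ hlt) h)
      exact absurd this (lt_irrefl _)
    · have hm : max (d f) (d g) = d f := max_eq_left h.le
      have hf : d f ≤ max (d (f + g)) (d g) := by
        have h1 := sub (f + g) (-g)
        rw [hneg] at h1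
        have e : f + g + -g = f := by ring
        rwa [e] at h1
      have : d f < d f := lt_of_le_of_lt hf (max_lt (hm ▸ hlt) h)
      exact absurd this (lt_irrefl _)
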